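/- Let D ⊆ ℝ^K be a nonempty closed convex set and let x : ℝ → ℝ^K be differentiable. Suppose that for every t ≥ 0 there exists c_t ∈ ℝ^K such that x'(t) = c_t − x(t) and ⟨c_t − P_D(x(t)), x(t) − P_D(x(t))⟩ ≤ 0. Then for every t ≥ 0, infDist(x(t), D)² ≤ infDist(x(0), D)² · e^{−2t}. In particular, x(t) converges to D as t → ∞ and D is a global attractor for the dynamics. -/

import Mathlib

open Metric Filter Topology
open scoped RealInnerProductSpace

/-- Lyapunov decay for the differential-inclusion trajectory with
Blackwell's separation condition relative to a nonempty closed convex set `D`: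
the squared distance to `D` decays like `e^{−2t}`, and in particular the
trajectory converges to `D` (so `D` is a global attractor for the dynamics). -/
theorem stmt2 {K : ℕ} (D : Set (EuclideanSpace ℝ (Fin K)))
    (hne : D.Nonempty) (hcl : IsClosed D) (hconv : Convex ℝ D)
    (P : EuclideanSpace ℝ (Fin K) → EuclideanSpace ℝ (Fin K))
    (hP : ∀ y, P y ∈ D ∧ ∀ z ∈ D, dist y (P y) ≤ dist y z)
    (x : ℝ → EuclideanSpace ℝ (Fin K)) (hx : Differentiable ℝ x)
    (hdrift : ∀ t : ℝ, 0 ≤ t → ∃ c : EuclideanSpace ℝ (Fin K),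
      deriv x t = c - x t ∧ ⟪c - P (x t), x t - P (x t)⟫ ≤ 0) :
    (∀ t : ℝ, 0 ≤ t →
        infDist (x t) D ^ 2 ≤ infDist (x 0) D ^ 2 * Real.exp (-2 * t)) ∧
      Tendsto (fun t => infDist (x t) D) atTop (𝓝 0) := by
  -- `P` is the metric projection, so `dist (x t) (P (x t)) = infDist (x t) D`
  have hPd : ∀ y, dist y (P y) = infDist y D := by
    intro y
    refine le_antisymm ?_ (infDist_le_dist_of_mem (hP y).1)
    by_contra h
    push_neg at h
    obtain ⟨z, hz, hzlt⟩ := (infDist_lt_iff hne).1 h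
    exact absurd ((hP y).2 z hz) (not_le.2 hzlt)
  set V : ℝ → ℝ := fun t => infDist (x t) D ^ 2 with hV
  have hVeq : ∀ t, V t = ‖x t - P (x t)‖ ^ 2 := by
    intro t
    simp [hV, ← hPd (x t), dist_eq_norm]
  -- V z ≤ ‖x z - p‖² for any p ∈ D
  have hVle : ∀ z, ∀ p ∈ D, V z ≤ ‖x z - p‖ ^ 2 := by
    intro z p hp
    have h1 : infDist (x z) D ≤ ‖x z - p‖ := by
      simpa [dist_eq_norm] using infDist_le_dist_of_mem (s := D) (x := x z) hp
    have h0 : (0 : ℝ) ≤ infDist (x z) D := infDist_nonneg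
    exact pow_le_pow_left₀ h0 h1 2
  -- derivative bound function
  set f' : ℝ → ℝ := fun t => 2 * ⟪x t - P (x t), deriv x t⟫ with hf'
  -- for each t, the comparison function z ↦ ‖x z - P (x t)‖² has derivative f' t at t
  have hg : ∀ t : ℝ, HasDerivAt (fun z => ‖x z - P (x t)‖ ^ 2) (f' t) t := by
    intro t
    have h1 : HasDerivAt (fun z => x z - P (x t)) (deriv x t) t :=
      (hx t).hasDerivAt.sub_const _
    have h2 := h1.inner (𝕜 := ℝ) h1
    have h3 : (fun z => ⟪x z - P (x t), x z - P (x t)⟫)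
        = fun z => ‖x z - P (x t)‖ ^ 2 := by
      funext z; rw [real_inner_self_eq_norm_sq]
    rw [h3] at h2
    convert h2 using 1
    show 2 * ⟪x t - P (x t), deriv x t⟫ = _
    rw [real_inner_comm (deriv x t)]
    ring
    all_goals rfl
  have hVcont : Continuous V :=
    ((continuous_infDist_pt D).comp hx.continuous).pow 2
  -- main Gronwall estimate
  have main : ∀ t : ℝ, 0 ≤ t → V t ≤ V 0 * Real.exp (-2 * t) := by
    intro b hb
    have := le_gronwallBound_of_liminf_deriv_right_le (f := V) (f' := f')
      (δ := V 0) (K := -2) (ε := 0) (a := 0) (b := b)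
      hVcont.continuousOn ?_ le_rfl ?_ b ⟨hb, le_rfl⟩
    · simpa [gronwallBound_ε0] using this
    · -- liminf slope condition
      intro t ht r hr
      have hslope : Tendsto (slope (fun z => ‖x z - P (x t)‖ ^ 2) t)
          (𝓝[≠] t) (𝓝 (f' t)) := hasDerivAt_iff_tendsto_slope.1 (hg t)
      have hev : ∀ᶠ z in 𝓝[>] t,
          slope (fun z => ‖x z - P (x t)‖ ^ 2) t z < r := by
        have hmono : 𝓝[>] t ≤ 𝓝[≠] t :=
          nhdsWithin_mono t fun z hz => ne_of_gt hz
        exact (hslope.mono_left hmono).eventually (Filter.Tendsto.eventually_lt_const hr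
          tendsto_id) |>.mono fun z hz => hz
      refine (hev.and self_mem_nhdsWithin).frequently.mono ?_
      rintro z ⟨hzr, hzt⟩
      have hzt' : (0 : ℝ) < z - t := sub_pos.2 hzt
      have hle : V z - V t ≤ ‖x z - P (x t)‖ ^ 2 - ‖x t - P (x t)‖ ^ 2 := by
        have := hVle z (P (x t)) (hP (x t)).1
        have h2 := hVeq t
        linarith
      calc (z - t)⁻¹ * (V z - V t)
          ≤ (z - t)⁻¹ * (‖x z - P (x t)‖ ^ 2 - ‖x t - P (x t)‖ ^ 2) := by
            exact mul_le_mul_of_nonneg_left hle (inv_nonneg.2 hzt'.le)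
        _ = slope (fun z => ‖x z - P (x t)‖ ^ 2) t z := by
            rw [slope_def_field, div_eq_inv_mul]
        _ < r := hzr
    · -- bound f' t ≤ -2 * V t + 0
      intro t ht
      obtain ⟨c, hc, hsep⟩ := hdrift t ht.1
      have hfeq : f' t = 2 * ⟪x t - P (x t), c - x t⟫ := by simp only [hf']; rw [hc]
      have expand : ⟪x t - P (x t), c - x t⟫
          = ⟪c - P (x t), x t - P (x t)⟫ - ‖x t - P (x t)‖ ^ 2 := by
        have h4 : (c : EuclideanSpace ℝ (Fin K)) - x t
            = (c - P (x t)) - (x t - P (x t)) := by abel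
        rw [h4, inner_sub_right, real_inner_comm, real_inner_self_eq_norm_sq]
      have hV' : V t = ‖x t - P (x t)‖ ^ 2 := hVeq t
      rw [hfeq, expand]
      nlinarith
  refine ⟨main, ?_⟩
  -- convergence: squeeze infDist between 0 and |infDist (x 0) D| * exp (-t)
  have h1 : ∀ t : ℝ, 0 ≤ t →
      infDist (x t) D ≤ |infDist (x 0) D| * Real.exp (-t) := by
    intro t ht
    have h2 := main t ht
    have h3 : infDist (x t) D ^ 2 ≤ (|infDist (x 0) D| * Real.exp (-t)) ^ 2 := by
      have : (|infDist (x 0) D| * Real.exp (-t)) ^ 2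
          = infDist (x 0) D ^ 2 * Real.exp (-2 * t) := by
        rw [mul_pow, sq_abs, ← Real.exp_nat_mul]; norm_num
      rw [this]; exact h2
    have h4 := Real.sqrt_le_sqrt h3
    rwa [Real.sqrt_sq infDist_nonneg, Real.sqrt_sq (by positivity)] at h4
  have hbound : Tendsto (fun t : ℝ => |infDist (x 0) D| * Real.exp (-t))
      atTop (𝓝 0) := by
    have := Real.tendsto_exp_neg_atTop_nhds_zero
    simpa using this.const_mul |infDist (x 0) D|
  refine squeeze_zero' ?_ ?_ hbound
  · exact Eventually.of_forall fun t => infDist_nonneg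
  · exact (eventually_ge_atTop 0).mono fun t ht => h1 t ht
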